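/- arXiv:2210.12601 — 2 statements merged into one kernel-verified Lean document; each statement's English description precedes it below -/
import Mathlib

section
/- Let G=(V,E) be a finite simple graph in which every vertex has degree at least 1, and let 0 < φ < 1 and 0 < ρ ≤ 1/2. If the conductance of G satisfies φ_G ≥ φ and the maximum cut value satisfies MC(G) ≤ 1 − ρ, then the bipartiteness ratio of G satisfies β_G ≥ φρ/2. -/
open scoped Classical
open Matrix

noncomputable section

namespace Sublinear

variable {V : Type*}

/-- The degree `d(v)` of a vertex, as a real number. -/
def deg [Fintype V] (G : SimpleGraph V) (v : V) : ℝ :=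
  ((Finset.univ.filter fun u => G.Adj v u).card : ℝ)

/-- The volume `μ_G(S)` of a set of vertices. -/
def vol [Fintype V] (G : SimpleGraph V) (S : Set V) : ℝ :=
  ∑ v ∈ Finset.univ.filter (fun v => v ∈ S), deg G v

/-- The number of ordered adjacent pairs `(u,v)` with `u ∈ S`, `v ∈ T`.
For disjoint `S`, `T` this equals the number `e_G(S,T)` of edges between `S` and `T`. -/
def eB [Fintype V] (G : SimpleGraph V) (S T : Set V) : ℝ :=
  (((Finset.univ : Finset (V × V)).filter
      fun p => p.1 ∈ S ∧ p.2 ∈ T ∧ G.Adj p.1 p.2).card : ℝ)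

/-- The number `e_G(S)` of edges with both endpoints in `S`. -/
def eIn [Fintype V] (G : SimpleGraph V) (S : Set V) : ℝ := eB G S S / 2

/-- The conductance `φ_G(S)` of a set of vertices. -/
def cond [Fintype V] (G : SimpleGraph V) (S : Set V) : ℝ :=
  eB G S Sᶜ / vol G S

/-- The conductance `φ_G` of the graph: the minimum of `φ_G(S)` over nonempty `S`
with `μ_G(S) ≤ μ_G/2`. -/
def conductance [Fintype V] (G : SimpleGraph V) : ℝ :=
  sInf {x | ∃ S : Set V, S.Nonempty ∧ vol G S ≤ vol G Set.univ / 2 ∧ x = cond G S}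

/-- The bipartiteness ratio `β_G(L,R)` of a pair of disjoint sets. -/
def bipRatio [Fintype V] (G : SimpleGraph V) (L R : Set V) : ℝ :=
  (2 * eIn G L + 2 * eIn G R + eB G (L ∪ R) (L ∪ R)ᶜ) / vol G (L ∪ R)

/-- The bipartiteness ratio `β_G(S)` of a set: the minimum of `β_G(L,R)` over
partitions `(L,R)` of `S`. -/
def bipS [Fintype V] (G : SimpleGraph V) (S : Set V) : ℝ :=
  sInf {x | ∃ L R : Set V, Disjoint L R ∧ L ∪ R = S ∧ x = bipRatio G L R}

/-- The bipartiteness ratio `β_G` of the graph: the minimum of `β_G(S)` over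
nonempty sets `S`. -/
def bip [Fintype V] (G : SimpleGraph V) : ℝ :=
  sInf {x | ∃ S : Set V, S.Nonempty ∧ x = bipS G S}

/-- The maximum cut value `MC(G)`: the maximum over sets `S` of the fraction of
edges cut by the bipartition `(S, Sᶜ)`. -/
def maxCut [Fintype V] (G : SimpleGraph V) : ℝ :=
  sSup {x | ∃ S : Set V, x = eB G S Sᶜ / eIn G Set.univ}

section Helpers
variable {V : Type*} [Fintype V] (G : SimpleGraph V)

lemma eB_nonneg (S T : Set V) : 0 ≤ eB G S T := Nat.cast_nonneg _

lemma eB_symm (S T : Set V) : eB G S T = eB G T S := by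
  unfold eB
  norm_cast
  apply Finset.card_bij' (fun p _ => p.swap) (fun p _ => p.swap) <;>
    simp +contextual [G.adj_comm, and_comm]

lemma eB_union_right (S T₁ T₂ : Set V) (h : Disjoint T₁ T₂) :
    eB G S (T₁ ∪ T₂) = eB G S T₁ + eB G S T₂ := by
  unfold eB
  rw [Finset.card_filter, Finset.card_filter, Finset.card_filter]
  push_cast
  rw [← Finset.sum_add_distrib]
  apply Finset.sum_congr rfl
  intro p _
  by_cases h1 : p.2 ∈ T₁ <;> by_cases h2 : p.2 ∈ T₂
  · exact absurd h2 (Set.disjoint_left.mp h h1)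
  · simp [h1, h2, Set.mem_union]
  · simp [h1, h2, Set.mem_union]
  · simp [h1, h2, Set.mem_union]

lemma eB_union_left (S₁ S₂ T : Set V) (h : Disjoint S₁ S₂) :
    eB G (S₁ ∪ S₂) T = eB G S₁ T + eB G S₂ T := by
  rw [eB_symm, eB_union_right G T S₁ S₂ h, eB_symm G T S₁, eB_symm G T S₂]

lemma eB_mono_right (S T₁ T₂ : Set V) (h : T₁ ⊆ T₂) : eB G S T₁ ≤ eB G S T₂ := by
  unfold eB
  norm_cast
  apply Finset.card_le_card
  apply Finset.monotone_filter_right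
  intro p _ hp
  exact ⟨hp.1, h hp.2.1, hp.2.2⟩

lemma vol_eq_eB_univ (S : Set V) : vol G S = eB G S Set.univ := by
  unfold vol deg eB
  rw [Finset.card_filter, Fintype.sum_prod_type, Finset.sum_filter]
  push_cast
  apply Finset.sum_congr rfl
  intro v _
  by_cases hv : v ∈ S
  · rw [if_pos hv, Finset.card_filter]
    push_cast
    apply Finset.sum_congr rfl
    intro u _
    simp [hv]
  · simp [hv]

lemma vol_nonneg (S : Set V) : 0 ≤ vol G S := by
  apply Finset.sum_nonneg
  intro v _
  exact Nat.cast_nonneg _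

lemma vol_pos (hdeg : ∀ v, 1 ≤ deg G v) (S : Set V) (hS : S.Nonempty) :
    0 < vol G S := by
  obtain ⟨v, hv⟩ := hS
  apply Finset.sum_pos
  · intro u _
    exact lt_of_lt_of_le zero_lt_one (hdeg u)
  · exact ⟨v, by simp [hv]⟩

end Helpers
section Core
variable {V : Type*} [Fintype V]

lemma vol_empty (G : SimpleGraph V) : vol G (∅ : Set V) = 0 := by
  unfold vol; simp

lemma vol_union (G : SimpleGraph V) (S T : Set V) (h : Disjoint S T) :
    vol G (S ∪ T) = vol G S + vol G T := by
  rw [vol_eq_eB_univ, eB_union_left G S T _ h, ← vol_eq_eB_univ, ← vol_eq_eB_univ]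

lemma core (G : SimpleGraph V) (hdeg : ∀ v, 1 ≤ deg G v)
    (φ ρ : ℝ) (hφ0 : 0 < φ) (hφ1 : φ < 1) (hρ0 : 0 < ρ) (hρ1 : ρ ≤ 1 / 2)
    (hcond' : ∀ S : Set V, S.Nonempty → vol G S ≤ vol G Set.univ / 2 → φ ≤ cond G S)
    (hMC' : ∀ T : Set V, eB G T Tᶜ / eIn G Set.univ ≤ 1 - ρ)
    (L R : Set V) (hLR : Disjoint L R) (hS : (L ∪ R).Nonempty) :
    φ * ρ / 2 ≤ bipRatio G L R := by
  set S := L ∪ R with hSdef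
  set B := Sᶜ with hBdef
  have hdisSB : Disjoint S B := disjoint_compl_right
  have hdisLB : Disjoint L B := hdisSB.mono_left Set.subset_union_left
  have hdisRB : Disjoint R B := hdisSB.mono_left Set.subset_union_right
  have hvolS : 0 < vol G S := vol_pos G hdeg S hS
  have hsplit : vol G Set.univ = vol G S + vol G B := by
    rw [← vol_union G S B hdisSB, Set.union_compl_self]
  have hm : eIn G Set.univ = vol G Set.univ / 2 := by
    rw [eIn, vol_eq_eB_univ]
  have hvolBnn : 0 ≤ vol G B := vol_nonneg G B
  set m := eIn G Set.univ with hmdef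
  have hmpos : 0 < m := by rw [hm]; linarith
  -- decompositions
  have hSS : eB G S S = eB G L L + eB G L R + eB G L R + eB G R R := by
    rw [hSdef, eB_union_left G L R _ hLR, eB_union_right G L L R hLR,
      eB_union_right G R L R hLR, eB_symm G R L]
    ring
  have hvolSdec : vol G S = eB G S S + eB G S B := by
    rw [vol_eq_eB_univ, ← Set.union_compl_self S, eB_union_right G S S Sᶜ disjoint_compl_right]
  have hvolBdec : vol G B = eB G S B + eB G B B := by
    rw [vol_eq_eB_univ, ← Set.union_compl_self S, eB_union_right G B S Sᶜ disjoint_compl_right,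
      eB_symm G B S]
  have hx : eB G S B = eB G L B + eB G R B := by
    rw [hSdef, eB_union_left G L R B hLR]
  -- complements
  have hdL : ∀ v, v ∈ L → v ∉ R := fun v hv => Set.disjoint_left.mp hLR hv
  have hLc : Lᶜ = R ∪ B := by
    ext v
    have := hdL v
    simp only [hBdef, hSdef, Set.mem_compl_iff, Set.mem_union]
    tauto
  have hLBc : (L ∪ B)ᶜ = R := by
    ext v
    have := hdL v
    simp only [hBdef, hSdef, Set.mem_compl_iff, Set.mem_union, not_or, not_not]
    tauto
  have hcutL : eB G L Lᶜ = eB G L R + eB G L B := by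
    rw [hLc, eB_union_right G L R B hdisRB]
  have hcutLB : eB G (L ∪ B) (L ∪ B)ᶜ = eB G L R + eB G R B := by
    rw [hLBc, eB_union_left G L B R hdisLB, eB_symm G B R]
  -- max cut inequalities
  have hc1 : eB G L R + eB G L B ≤ (1 - ρ) * m := by
    have := hMC' L
    rw [hcutL] at this
    calc eB G L R + eB G L B = eB G L Lᶜ := hcutL.symm
      _ ≤ (1 - ρ) * m := by
          rw [hcutL]
          have h2 := hMC' L
          rw [hcutL, div_le_iff₀ hmpos] at h2
          exact h2
  have hc2 : eB G L R + eB G R B ≤ (1 - ρ) * m := by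
    have h2 := hMC' (L ∪ B)
    rw [hcutLB, div_le_iff₀ hmpos] at h2
    exact h2
  -- positivity
  have hLL := eB_nonneg G L L
  have hRR := eB_nonneg G R R
  have hLRn := eB_nonneg G L R
  have hLBn := eB_nonneg G L B
  have hRBn := eB_nonneg G R B
  have hBBn := eB_nonneg G B B
  -- goal reduction
  have hgoal : φ * ρ / 2 * vol G S ≤ 2 * eIn G L + 2 * eIn G R + eB G S B := by
    rw [eIn, eIn]
    by_cases hcase : vol G S ≤ vol G Set.univ / 2
    · -- small side: conductance on S
      have hco := hcond' S hS hcase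
      rw [cond, le_div_iff₀ hvolS, ← hBdef] at hco
      have hsm : φ * ρ / 2 ≤ φ := by nlinarith
      have hA := mul_le_mul_of_nonneg_right hsm hvolS.le
      linarith
    · push_neg at hcase
      by_cases hcase2 : vol G B ≤ ρ * m
      · -- uncut edges argument
        have h3 : vol G S ≤ 2 * m := by rw [hm] at *; linarith
        have hA := mul_le_mul_of_nonneg_left h3
          (by positivity : (0:ℝ) ≤ φ * ρ / 2)
        have hB : φ * (ρ * m) ≤ 1 * (ρ * m) :=
          mul_le_mul_of_nonneg_right hφ1.le (by positivity)
        linarith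
      · push_neg at hcase2
        -- conductance on B
        have hBne : B.Nonempty := by
          rw [Set.nonempty_iff_ne_empty]
          intro hBe
          rw [hBe, vol_empty] at hcase2
          nlinarith
        have hBvol : vol G B ≤ vol G Set.univ / 2 := by linarith
        have hco := hcond' B hBne hBvol
        have hvolB : 0 < vol G B := vol_pos G hdeg B hBne
        rw [cond, le_div_iff₀ hvolB] at hco
        have hBc : Bᶜ = S := by rw [hBdef, compl_compl]
        rw [hBc, eB_symm G B S] at hco
        have h1 : φ * (ρ * m) ≤ φ * vol G B :=
          mul_le_mul_of_nonneg_left hcase2.le hφ0.le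
        have h3 : vol G S ≤ 2 * m := by rw [hm] at *; linarith
        have hA := mul_le_mul_of_nonneg_left h3
          (by positivity : (0:ℝ) ≤ φ * ρ / 2)
        linarith
  rw [bipRatio, le_div_iff₀ hvolS, ← hSdef, ← hBdef]
  exact hgoal
end Core
/-- If every vertex of `G` has degree at least 1, `0 < φ < 1`,
`0 < ρ ≤ 1/2`, the conductance of `G` is at least `φ`, and the maximum cut value
of `G` is at most `1 - ρ`, then the bipartiteness ratio of `G` is at least `φρ/2`. -/
theorem bipartiteness_ratio_lower_bound
    {V : Type*} [Fintype V] (G : SimpleGraph V)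
    (hdeg : ∀ v, 1 ≤ deg G v)
    (φ ρ : ℝ) (hφ0 : 0 < φ) (hφ1 : φ < 1) (hρ0 : 0 < ρ) (hρ1 : ρ ≤ 1 / 2)
    (hcond : φ ≤ conductance G)
    (hMC : maxCut G ≤ 1 - ρ) :
    φ * ρ / 2 ≤ bip G := by
  have hVne : Nonempty V := by
    by_contra hV
    rw [not_nonempty_iff] at hV
    have he : {x | ∃ S : Set V, S.Nonempty ∧ vol G S ≤ vol G Set.univ / 2 ∧ x = cond G S}
        = ∅ := by
      ext x
      simp only [Set.mem_setOf_eq, Set.mem_empty_iff_false, iff_false, not_exists]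
      rintro S ⟨⟨v, _⟩, _⟩
      exact hV.elim v
    rw [conductance, he, Real.sInf_empty] at hcond
    linarith
  have hcond' : ∀ S : Set V, S.Nonempty → vol G S ≤ vol G Set.univ / 2 → φ ≤ cond G S := by
    intro S hS hvol
    refine hcond.trans (csInf_le ⟨0, ?_⟩ ⟨S, hS, hvol, rfl⟩)
    rintro x ⟨T, hT, _, rfl⟩
    exact div_nonneg (eB_nonneg G T Tᶜ) (vol_nonneg G T)
  have hMC' : ∀ T : Set V, eB G T Tᶜ / eIn G Set.univ ≤ 1 - ρ := by
    intro T
    refine (le_csSup ?_ ?_).trans hMC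
    case refine_2 => exact ⟨T, rfl⟩
    have hsub : {x | ∃ S : Set V, x = eB G S Sᶜ / eIn G Set.univ}
        ⊆ Set.range (fun S : Set V => eB G S Sᶜ / eIn G Set.univ) := by
      rintro x ⟨S, rfl⟩
      exact ⟨S, rfl⟩
    exact ((Set.finite_range _).subset hsub).bddAbove
  rw [bip]
  apply le_csInf
  case h₁ => exact ⟨bipS G Set.univ, Set.univ, Set.univ_nonempty, rfl⟩
  rintro x ⟨S, hS, rfl⟩
  rw [bipS]
  apply le_csInf
  case h₁ => exact ⟨bipRatio G S ∅, S, ∅, disjoint_bot_right, Set.union_empty S, rfl⟩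
  rintro y ⟨L, R, hLR, hU, rfl⟩
  exact core G hdeg φ ρ hφ0 hφ1 hρ0 hρ1 hcond' hMC' L R hLR (hU ▸ hS)

end Sublinear
end
end

section
/- Let I = (G,q,c) be an instance of Max E2Lin(q) with OPT(I) ≥ 1 − ε for some 0 < ε < 1. Then the vertex set of the label-extended graph G_I can be partitioned into q sets S_0, …, S_{q−1} such that for every i, μ_{G_I}(S_i) = μ_{G_I}/q and the conductance φ_{G_I}(S_i) is at most ε. -/
open scoped Classical
open Matrix

noncomputable section

namespace Sublinear

variable {V : Type*}

/-- The label-extended graph `G_I` of a Max E2Lin(q) instance `I = (G, q, c)`: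
vertices are pairs `(u,i)` with `u` a vertex of `G` and `i ∈ Z_q`, and `(u,i)` is
adjacent to `(v,j)` iff `{u,v}` is an edge of `G` and `j = i + c u v`. -/
def labelExt {V : Type*} (G : SimpleGraph V) {q : ℕ} (c : V → V → ZMod q)
    (hc : ∀ u v, G.Adj u v → c v u = -c u v) : SimpleGraph (V × ZMod q) where
  Adj p p' := G.Adj p.1 p'.1 ∧ p'.2 = p.2 + c p.1 p'.1
  symm := by
    constructor
    rintro ⟨u, i⟩ ⟨v, j⟩ ⟨hadj, hj⟩
    refine ⟨hadj.symm, ?_⟩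
    simp only at hj ⊢
    rw [hc u v hadj, hj]
    ring
  loopless := by
    constructor
    rintro ⟨u, i⟩ ⟨hadj, _⟩
    exact G.loopless.irrefl u hadj

/-- The fraction of the edges of `G` that are satisfied by the assignment `ψ`
in the Max E2Lin(q) instance `(G, q, c)`: an edge `{u,v}` is satisfied if
`ψ u - ψ v = c u v`. -/
def satFrac [Fintype V] (G : SimpleGraph V) {q : ℕ} (c : V → V → ZMod q)
    (ψ : V → ZMod q) : ℝ :=
  (((Finset.univ : Finset (V × V)).filter
      fun p => G.Adj p.1 p.2 ∧ ψ p.1 - ψ p.2 = c p.1 p.2).card : ℝ)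
    / eB G Set.univ Set.univ


-- Auxiliary lemmas ------------------------------------------------------

lemma vol_univ_eq [Fintype V] (G : SimpleGraph V) :
    vol G Set.univ = ((Finset.univ.filter fun p : V × V => G.Adj p.1 p.2).card : ℝ) := by
  unfold vol deg
  simp only [Set.mem_univ, Finset.filter_true]
  rw [Finset.card_filter, Fintype.sum_prod_type]
  push_cast
  refine Finset.sum_congr rfl fun v _ => ?_
  rw [Finset.card_filter]
  push_cast
  rfl

lemma deg_labelExt [Fintype V] (G : SimpleGraph V) {q : ℕ} [NeZero q] (c : V → V → ZMod q)
    (hc : ∀ u v, G.Adj u v → c v u = -c u v) (u : V) (i : ZMod q) :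
    deg (labelExt G c hc) (u, i) = deg G u := by
  unfold deg
  norm_cast
  refine Finset.card_nbij' (fun p => p.1) (fun v => (v, i + c u v)) ?_ ?_ ?_ ?_
  · rintro ⟨v, j⟩ hm
    simp only [Finset.mem_coe, Finset.mem_filter, Finset.mem_univ, true_and] at hm ⊢
    simp only [labelExt] at hm ⊢
    exact hm.1
  · intro v hv
    simp only [Finset.mem_coe, Finset.mem_filter, Finset.mem_univ, true_and] at hv ⊢
    simp only [labelExt] at hv ⊢
    exact ⟨hv, trivial⟩
  · rintro ⟨v, j⟩ hm
    simp only [Finset.mem_coe, Finset.mem_filter, Finset.mem_univ, true_and] at hm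
    simp only [labelExt] at hm
    simp [hm.2.symm]
  · intro v hv
    rfl

lemma vol_labelExt_univ [Fintype V] (G : SimpleGraph V) {q : ℕ} [NeZero q] (c : V → V → ZMod q)
    (hc : ∀ u v, G.Adj u v → c v u = -c u v) :
    vol (labelExt G c hc) Set.univ = q * vol G Set.univ := by
  unfold vol
  simp only [Set.mem_univ, Finset.filter_true]
  rw [Fintype.sum_prod_type]
  simp [deg_labelExt, Finset.mul_sum, ZMod.card, Finset.card_univ]

lemma vol_labelExt_slice [Fintype V] (G : SimpleGraph V) {q : ℕ} [NeZero q] (c : V → V → ZMod q)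
    (hc : ∀ u v, G.Adj u v → c v u = -c u v) (ψ : V → ZMod q) (i : ZMod q) :
    vol (labelExt G c hc) {p : V × ZMod q | p.2 = i - ψ p.1} = vol G Set.univ := by
  unfold vol
  simp only [Set.mem_setOf_eq, Set.mem_univ, Finset.filter_true]
  rw [Finset.sum_filter, Fintype.sum_prod_type]
  refine Finset.sum_congr rfl fun u _ => ?_
  have h := Finset.sum_ite_eq' (Finset.univ : Finset (ZMod q)) (i - ψ u)
    (fun j => deg (labelExt G c hc) (u, j))
  simp only [Finset.mem_univ, if_true] at h
  rw [deg_labelExt] at h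
  refine Eq.trans (Finset.sum_congr rfl fun y _ => ?_) h
  by_cases hy : y = i - ψ u <;> simp [hy]

/-- If `I = (G,q,c)` is a Max E2Lin(q) instance with
`OPT(I) ≥ 1 - ε`, `0 < ε < 1`, then the vertex set of the label-extended graph
`G_I` can be partitioned into `q` sets, each of volume `μ_{G_I}/q` and
conductance at most `ε`. -/
theorem e2lin_completeness_partition
    {V : Type*} [Fintype V] (G : SimpleGraph V)
    (hdeg : ∀ v, 1 ≤ deg G v)
    (q : ℕ) (hq : 2 ≤ q) [NeZero q]
    (c : V → V → ZMod q) (hc : ∀ u v, G.Adj u v → c v u = -c u v)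
    (ε : ℝ) (hε0 : 0 < ε) (hε1 : ε < 1)
    (hopt : ∃ ψ : V → ZMod q, 1 - ε ≤ satFrac G c ψ) :
    ∃ S : ZMod q → Set (V × ZMod q),
      (∀ i j, i ≠ j → Disjoint (S i) (S j)) ∧
      (⋃ i, S i) = Set.univ ∧
      ∀ i, vol (labelExt G c hc) (S i) = vol (labelExt G c hc) Set.univ / q ∧
           cond (labelExt G c hc) (S i) ≤ ε := by
  obtain ⟨ψ, hψ⟩ := hopt
  have heB : eB G Set.univ Set.univ
      = (((Finset.univ : Finset (V × V)).filter fun p => G.Adj p.1 p.2).card : ℝ) := by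
    unfold eB
    norm_cast
    congr 1
    ext p
    simp
  have hsat : satFrac G c ψ
      = ((((Finset.univ : Finset (V × V)).filter
          fun p => G.Adj p.1 p.2 ∧ ψ p.1 - ψ p.2 = c p.1 p.2).card : ℝ))
        / (((Finset.univ : Finset (V × V)).filter fun p => G.Adj p.1 p.2).card : ℝ) := by
    unfold satFrac
    rw [heB]
  set M : ℕ := ((Finset.univ : Finset (V × V)).filter fun p => G.Adj p.1 p.2).card with hMdef
  set N : ℕ := ((Finset.univ : Finset (V × V)).filter
      fun p => G.Adj p.1 p.2 ∧ ψ p.1 - ψ p.2 = c p.1 p.2).card with hNdef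
  have hMpos : (0 : ℝ) < M := by
    rcases Nat.eq_zero_or_pos M with h0 | h
    · exfalso
      rw [hsat, h0] at hψ
      norm_num at hψ
      linarith
    · exact_mod_cast h
  have hNge : (1 - ε) * M ≤ (N : ℝ) := by
    rw [hsat, le_div_iff₀ hMpos] at hψ
    exact hψ
  have hvolG : vol G Set.univ = (M : ℝ) := by rw [vol_univ_eq]
  refine ⟨fun i => {p : V × ZMod q | p.2 = i - ψ p.1}, ?_, ?_, ?_⟩
  · intro i j hij
    rw [Set.disjoint_left]
    rintro ⟨u, k⟩ hi hj
    simp only [Set.mem_setOf_eq] at hi hj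
    exact hij (sub_left_inj.mp (hi.symm.trans hj))
  · ext ⟨u, k⟩
    simp only [Set.mem_iUnion, Set.mem_setOf_eq, Set.mem_univ, iff_true]
    exact ⟨k + ψ u, by ring⟩
  · intro i
    have hvs := vol_labelExt_slice G c hc ψ i
    have hvu := vol_labelExt_univ G c hc
    have hqR : (q : ℝ) ≠ 0 := by
      exact_mod_cast (NeZero.ne q)
    constructor
    · rw [hvs, hvu]
      field_simp
    · set K : ℕ := ((Finset.univ : Finset (V × V)).filter
        fun p => G.Adj p.1 p.2 ∧ ¬(ψ p.1 - ψ p.2 = c p.1 p.2)).card with hKdef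
      have hNK : N + K = M := by
        have h := Finset.card_filter_add_card_filter_not
          (s := (Finset.univ : Finset (V × V)).filter fun p => G.Adj p.1 p.2)
          (p := fun p : V × V => ψ p.1 - ψ p.2 = c p.1 p.2)
        rw [Finset.filter_filter, Finset.filter_filter] at h
        simpa [hNdef, hKdef, hMdef] using h
      have hcross : eB (labelExt G c hc) {p : V × ZMod q | p.2 = i - ψ p.1}
          {p : V × ZMod q | p.2 = i - ψ p.1}ᶜ = (K : ℝ) := by
        unfold eB
        norm_cast
        refine Finset.card_nbij' (fun p => (p.1.1, p.2.1))
          (fun p => ((p.1, i - ψ p.1), (p.2, i - ψ p.1 + c p.1 p.2))) ?_ ?_ ?_ ?_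
        · rintro ⟨⟨u, j⟩, ⟨v, k⟩⟩ hm
          simp only [Finset.mem_coe, Finset.mem_filter, Finset.mem_univ, true_and, Set.mem_setOf_eq,
            Set.mem_compl_iff, labelExt] at hm ⊢
          obtain ⟨h1, h2, h3, h4⟩ := hm
          refine ⟨h3, fun hEq => h2 ?_⟩
          rw [h4, h1]
          linear_combination -hEq
        · rintro ⟨u, v⟩ hm
          simp only [Finset.mem_coe, Finset.mem_filter, Finset.mem_univ, true_and, Set.mem_setOf_eq,
            Set.mem_compl_iff, labelExt] at hm ⊢
          obtain ⟨h1, h2⟩ := hm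
          refine ⟨fun hEq => h2 ?_, h1, trivial⟩
          linear_combination -hEq
        · rintro ⟨⟨u, j⟩, ⟨v, k⟩⟩ hm
          simp only [Finset.mem_coe, Finset.mem_filter, Finset.mem_univ, true_and, Set.mem_setOf_eq,
            Set.mem_compl_iff, labelExt] at hm
          obtain ⟨h1, h2, h3, h4⟩ := hm
          simp [Prod.ext_iff, h1, h4]
        · rintro ⟨u, v⟩ _
          rfl
      unfold cond
      rw [hcross, hvs, hvolG, div_le_iff₀ hMpos]
      have hKM : (K : ℝ) = (M : ℝ) - N := by
        have h : (N : ℝ) + K = M := by exact_mod_cast hNK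
        linarith
      linarith


end Sublinear
end
end
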